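/- arXiv:1705.02725 — 3 statements merged into one kernel-verified Lean document; each statement's English description precedes it below -/
import Mathlib

section
/- Let b − a ≥ 1, ν ≥ 0, β ∈ ℝ, μ > 2 and 0 < κ < 1/2. Then for every sufficiently small γ ∈ (0, 1] there exists a real number ω with β + γ^{−ν} a + 1/4 < ω < β + γ^{−ν} b − 1/4 such that |ω/(2π) − q/p| ≥ γ^κ/p^μ for all integers p ≥ 1 and q ∈ ℤ. -/
lemma dio_sqrt2 (m p : ℕ) (hm : 1 ≤ m) (hp : 1 ≤ p) (q : ℤ) :
    1 / (4 * m * p ^ 2) ≤ |(m : ℝ) * Real.sqrt 2 - q / p| := by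
  have hs2 : Real.sqrt 2 ^ 2 = 2 := Real.sq_sqrt (by norm_num)
  have hs0 : (0:ℝ) ≤ Real.sqrt 2 := Real.sqrt_nonneg 2
  have hslb : (1.4:ℝ) < Real.sqrt 2 := by nlinarith
  have hsub : Real.sqrt 2 < 1.5 := by nlinarith
  have hmR : (1:ℝ) ≤ m := by exact_mod_cast hm
  have hpR : (1:ℝ) ≤ p := by exact_mod_cast hp
  have hp0 : (0:ℝ) < p := by linarith
  have hm0 : (0:ℝ) < m := by linarith
  have hmp1 : (1:ℝ) ≤ (m:ℝ) * p := by nlinarith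
  -- the integer 2*(m*p)^2 - q^2 is nonzero
  have hne : (2 * ((m:ℤ) * p) ^ 2 - q ^ 2 : ℤ) ≠ 0 := by
    intro h
    have hq2 : (q:ℝ) ^ 2 = 2 * ((m:ℝ) * p) ^ 2 := by
      have h' : (q:ℤ) ^ 2 = 2 * ((m:ℤ) * p) ^ 2 := by omega
      exact_mod_cast congrArg (fun z : ℤ => (z : ℝ)) h'
    have hmp0 : (0:ℝ) < (m:ℝ) * p := by positivity
    have hsq : Real.sqrt 2 = |(q:ℝ)| / ((m:ℝ) * p) := by
      rw [show (2:ℝ) = (|(q:ℝ)| / ((m:ℝ) * p)) ^ 2 by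
        rw [div_pow, sq_abs, hq2]; field_simp]
      exact Real.sqrt_sq (by positivity)
    have hrat : ((((|q| : ℤ) : ℚ) / (((m * p : ℕ) : ℤ) : ℚ) : ℚ) : ℝ)
        = |(q:ℝ)| / ((m:ℝ) * p) := by push_cast; ring
    exact Rat.not_irrational _ (hrat ▸ (hsq ▸ irrational_sqrt_two))
  have hge1 : (1:ℝ) ≤ |2 * ((m:ℝ) * p) ^ 2 - (q:ℝ) ^ 2| := by
    have h1 : (1:ℤ) ≤ |2 * ((m:ℤ) * p) ^ 2 - q ^ 2| := Int.one_le_abs hne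
    calc (1:ℝ) ≤ ((|2 * ((m:ℤ) * p) ^ 2 - q ^ 2| : ℤ) : ℝ) := by exact_mod_cast h1
      _ = |2 * ((m:ℝ) * p) ^ 2 - (q:ℝ) ^ 2| := by push_cast; ring_nf
  -- factorization
  have hfact : |(m:ℝ) * Real.sqrt 2 * p - q| * |(m:ℝ) * Real.sqrt 2 * p + q|
      = |2 * ((m:ℝ) * p) ^ 2 - (q:ℝ) ^ 2| := by
    rw [← abs_mul]; congr 1; nlinarith
  have key : 1 / (4 * (m:ℝ) * p) ≤ |(m:ℝ) * Real.sqrt 2 * p - q| := by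
    by_cases hc : 1 ≤ |(m:ℝ) * Real.sqrt 2 * p - q|
    · calc 1 / (4 * (m:ℝ) * p) ≤ 1 := by
            rw [div_le_one (by positivity)]; nlinarith
        _ ≤ _ := hc
    · push_neg at hc
      have hq : |(q:ℝ)| ≤ (m:ℝ) * Real.sqrt 2 * p + 1 := by
        have := abs_sub_abs_le_abs_sub (q:ℝ) ((m:ℝ) * Real.sqrt 2 * p)
        have habs : |(m:ℝ) * Real.sqrt 2 * p| = (m:ℝ) * Real.sqrt 2 * p :=
          abs_of_nonneg (by positivity)
        rw [abs_sub_comm] at this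
        nlinarith [abs_nonneg ((q:ℝ))]
      have hplus : |(m:ℝ) * Real.sqrt 2 * p + q| ≤ 4 * (m:ℝ) * p := by
        calc |(m:ℝ) * Real.sqrt 2 * p + q| ≤ |(m:ℝ) * Real.sqrt 2 * p| + |(q:ℝ)| :=
              abs_add_le _ _
          _ ≤ (m:ℝ) * Real.sqrt 2 * p + ((m:ℝ) * Real.sqrt 2 * p + 1) := by
              rw [abs_of_nonneg (by positivity)]; linarith
          _ ≤ 4 * (m:ℝ) * p := by nlinarith
      rw [div_le_iff₀ (by positivity)]
      calc 1 ≤ |(m:ℝ) * Real.sqrt 2 * p - q| * |(m:ℝ) * Real.sqrt 2 * p + q| := by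
            rw [hfact]; exact hge1
        _ ≤ |(m:ℝ) * Real.sqrt 2 * p - q| * (4 * (m:ℝ) * p) := by
            exact mul_le_mul_of_nonneg_left hplus (abs_nonneg _)
  have heq : |(m:ℝ) * Real.sqrt 2 - q / p| = |(m:ℝ) * Real.sqrt 2 * p - q| / p := by
    rw [show (m:ℝ) * Real.sqrt 2 - q / p = ((m:ℝ) * Real.sqrt 2 * p - q) / p by
      field_simp, abs_div, abs_of_pos hp0]
  rw [heq, div_le_div_iff₀ (by positivity) hp0]
  have key' : 1 ≤ |(m:ℝ) * Real.sqrt 2 * p - q| * (4 * (m:ℝ) * p) := by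
    rwa [div_le_iff₀ (by positivity)] at key
  nlinarith [mul_le_mul_of_nonneg_right key' hp0.le]


lemma density_sqrt2 (A : ℝ) : ∃ (n : ℤ) (m : ℕ), 1 ≤ m ∧ m ≤ 432 ∧
    A < n - m * Real.sqrt 2 ∧ n - m * Real.sqrt 2 < A + 1 / (4 * Real.pi) := by
  have hs2 : Real.sqrt 2 ^ 2 = 2 := Real.sq_sqrt (by norm_num)
  have hs0 : (0:ℝ) ≤ Real.sqrt 2 := Real.sqrt_nonneg 2
  have hslb : (1.41421:ℝ) < Real.sqrt 2 := by nlinarith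
  have hsub : Real.sqrt 2 < 1.41422 := by nlinarith
  set s : ℝ := 17 - 12 * Real.sqrt 2 with hs_def
  have hs1 : (0.02936:ℝ) < s := by rw [hs_def]; nlinarith
  have hs2' : s < 0.02948 := by rw [hs_def]; nlinarith
  set δ : ℝ := 1 / (4 * Real.pi) with hδ_def
  have hπ1 := Real.pi_gt_d6
  have hπ2 := Real.pi_lt_d2
  have hδ1 : (0.0793:ℝ) < δ := by
    rw [hδ_def, lt_div_iff₀ (by positivity)]; nlinarith
  have hδ2 : δ < 0.0796 := by
    rw [hδ_def, div_lt_iff₀ (by positivity)]; nlinarith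
  set r : ℝ := A - ⌊A⌋ with hr_def
  have hr0 : 0 ≤ r := by rw [hr_def]; linarith [Int.floor_le A]
  have hr1 : r < 1 := by rw [hr_def]; linarith [Int.lt_floor_add_one A]
  set k : ℤ := ⌊(r + δ/2) / s⌋ + 1 with hk_def
  have hs_pos : (0:ℝ) < s := by linarith
  have hku : (r + δ/2) / s < k := by rw [hk_def]; push_cast; exact Int.lt_floor_add_one _
  have hkl : (k:ℝ) ≤ (r + δ/2) / s + 1 := by
    rw [hk_def]; push_cast; linarith [Int.floor_le ((r + δ/2) / s)]
  have hks_lb : r + δ/2 < k * s := by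
    rw [div_lt_iff₀ hs_pos] at hku; linarith
  have hks_ub : (k:ℝ) * s ≤ r + δ/2 + s := by
    have := mul_le_mul_of_nonneg_right hkl hs_pos.le
    rw [add_mul, div_mul_cancel₀ _ hs_pos.ne'] at this; linarith
  have hk2 : 2 ≤ k := by
    have h1 : (1:ℤ) ≤ ⌊(r + δ/2) / s⌋ := by
      apply Int.le_floor.mpr
      push_cast
      rw [le_div_iff₀ hs_pos]; linarith
    omega
  have hk36 : k ≤ 36 := by
    have h36 : ⌊(r + δ/2) / s⌋ < 36 := by
      apply Int.floor_lt.mpr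
      push_cast
      rw [div_lt_iff₀ hs_pos]; nlinarith
    omega
  refine ⟨⌊A⌋ + 17 * k, (12 * k).toNat, ?_, ?_, ?_, ?_⟩
  · omega
  · omega
  · have hmval : ((12 * k).toNat : ℝ) = 12 * (k : ℝ) := by
      have : ((12 * k).toNat : ℤ) = 12 * k := Int.toNat_of_nonneg (by omega)
      exact_mod_cast congrArg (fun z : ℤ => (z : ℝ)) this
    rw [hmval]
    push_cast
    have : ((⌊A⌋:ℝ) + 17 * k) - 12 * k * Real.sqrt 2 = (⌊A⌋:ℝ) + k * s := by
      rw [hs_def]; ring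
    rw [this]; linarith [hr_def]
  · have hmval : ((12 * k).toNat : ℝ) = 12 * (k : ℝ) := by
      have : ((12 * k).toNat : ℤ) = 12 * k := Int.toNat_of_nonneg (by omega)
      exact_mod_cast congrArg (fun z : ℤ => (z : ℝ)) this
    rw [hmval]
    push_cast
    have h1 : ((⌊A⌋:ℝ) + 17 * k) - 12 * k * Real.sqrt 2 = (⌊A⌋:ℝ) + k * s := by
      rw [hs_def]; ring
    rw [h1]; linarith [hr_def]

/-- For every sufficiently small `γ ∈ (0,1]` there exists `ω` in the interval
`(β + γ^{-ν} a + 1/4, β + γ^{-ν} b - 1/4)` satisfying the Diophantine condition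
`|ω/(2π) - q/p| ≥ γ^κ / p^μ` for all integers `p ≥ 1`, `q`. -/
theorem large_twist_frequency_exists
    (a b ν β μ κ : ℝ) (hab : 1 ≤ b - a) (hν : 0 ≤ ν)
    (hμ : 2 < μ) (hκ0 : 0 < κ) (hκ : κ < 1 / 2) :
    ∃ γ₀ > 0, ∀ γ : ℝ, 0 < γ → γ ≤ γ₀ → γ ≤ 1 →
      ∃ ω : ℝ,
        β + γ ^ (-ν) * a + 1 / 4 < ω ∧
        ω < β + γ ^ (-ν) * b - 1 / 4 ∧
        ∀ p : ℕ, 1 ≤ p → ∀ q : ℤ,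
          γ ^ κ / (p : ℝ) ^ μ ≤ |ω / (2 * Real.pi) - (q : ℝ) / (p : ℝ)| := by
  refine ⟨((1728:ℝ)⁻¹) ^ (1/κ), Real.rpow_pos_of_pos (by norm_num) _, ?_⟩
  intro γ hγ0 hγγ₀ hγ1
  have hπ := Real.pi_pos
  have hγκ : γ ^ κ ≤ (1728:ℝ)⁻¹ := by
    calc γ ^ κ ≤ (((1728:ℝ)⁻¹) ^ (1/κ)) ^ κ :=
          Real.rpow_le_rpow hγ0.le hγγ₀ hκ0.le
      _ = (1728:ℝ)⁻¹ := by
          rw [← Real.rpow_mul (by norm_num), one_div_mul_cancel hκ0.ne', Real.rpow_one]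
  have hge : (1:ℝ) ≤ γ ^ (-ν) :=
    Real.one_le_rpow_of_pos_of_le_one_of_nonpos hγ0 hγ1 (neg_nonpos.mpr hν)
  have hgap : (1:ℝ) ≤ γ ^ (-ν) * (b - a) := by nlinarith
  set A : ℝ := (β + γ ^ (-ν) * a + 1/4) / (2 * Real.pi) with hA_def
  obtain ⟨n, m, hm1, hm432, hx1, hx2⟩ := density_sqrt2 A
  set x : ℝ := (n:ℝ) - m * Real.sqrt 2 with hx_def
  have hgap' : γ ^ (-ν) * a + 1 ≤ γ ^ (-ν) * b := by nlinarith
  refine ⟨2 * Real.pi * x, ?_, ?_, ?_⟩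
  · rw [hA_def, div_lt_iff₀ (by positivity)] at hx1
    linarith
  · have hsum : A + 1 / (4 * Real.pi) = (β + γ ^ (-ν) * a + 3/4) / (2 * Real.pi) := by
      rw [hA_def]; field_simp; ring
    rw [hsum, lt_div_iff₀ (by positivity)] at hx2
    linarith
  · intro p hp q
    have hpR : (1:ℝ) ≤ p := by exact_mod_cast hp
    have hp0 : (0:ℝ) < p := by linarith
    have hmR : (1:ℝ) ≤ m := by exact_mod_cast hm1
    have hmub : (m:ℝ) ≤ 432 := by exact_mod_cast hm432
    have hωdiv : 2 * Real.pi * x / (2 * Real.pi) = x := by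
      field_simp
    rw [hωdiv]
    have habs : |x - (q:ℝ) / p| = |(m:ℝ) * Real.sqrt 2 - ((n * p - q : ℤ) : ℝ) / p| := by
      rw [abs_sub_comm, hx_def]
      congr 1
      push_cast
      field_simp
      ring
    rw [habs]
    have hdio := dio_sqrt2 m p hm1 hp (n * p - q)
    have hpμ : (p:ℝ) ^ (2:ℝ) ≤ (p:ℝ) ^ μ :=
      Real.rpow_le_rpow_of_exponent_le hpR (by linarith)
    have hp2 : (p:ℝ) ^ (2:ℝ) = (p:ℝ) ^ (2:ℕ) := by
      rw [← Real.rpow_natCast (p:ℝ) 2]; norm_num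
    have hpμ' : (p:ℝ) ^ (2:ℕ) ≤ (p:ℝ) ^ μ := hp2 ▸ hpμ
    have hμpos : (0:ℝ) < (p:ℝ) ^ μ := Real.rpow_pos_of_pos hp0 μ
    calc γ ^ κ / (p:ℝ) ^ μ ≤ (1728:ℝ)⁻¹ / (p:ℝ) ^ (2:ℕ) := by
          apply div_le_div₀ (by norm_num) hγκ (by positivity) hpμ'
      _ ≤ 1 / (4 * m * p ^ 2) := by
          rw [div_le_div_iff₀ (by positivity) (by positivity)]
          nlinarith [pow_pos hp0 2]
      _ ≤ _ := hdio
end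

section
/- Invertibility of the KAM coordinate change. Let ν ≥ 0, 0 < κ < 1/2, 0 < γ ≤ 1, 0 < r₊ < r, 0 < s₊ < s with 7 s₊ < s < (γ^κ/6)(r − r₊), let δ = (r − r₊)/6, ρ = (s − s₊)/6, and set D_j = D(r − jδ, s − jρ) for 0 ≤ j ≤ 6. Let u, v be analytic on D₃, 2π-periodic in ξ, satisfying γ^{ν+κ}|u| + |v| ≤ γ^ν ϑ s on D₃, γ^{ν+κ}|D_ξ u| + |D_ξ v| ≤ γ^ν ϑ on D₃, and γ^{ν+κ}|D_η u| + |D_η v| ≤ ϑ on D₃, with 0 ≤ ϑ < 1/8. Then for every (x, y) ∈ D₄ there exists a unique (ξ, η) ∈ D₃ with x = ξ + u(ξ, η) and y = η + v(ξ, η); moreover γ^{ν+κ}|ξ − x| + |η − y| ≤ (ϑ/(1 − ϑ)) γ^ν s. -/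
/-- The complex domain `D(r, ρ)` around the center `c`:
`{(ξ, η) : |Im ξ| < r, |η - c| < ρ}`. -/
def Dom (r ρ : ℝ) (c : ℂ) : Set (ℂ × ℂ) :=
  {z | |z.1.im| < r ∧ ‖z.2 - c‖ < ρ}

open Metric

lemma exists_phase (a : ℂ) : ∃ c : ℂ, ‖c‖ = 1 ∧ c * a = (‖a‖ : ℂ) := by
  rcases eq_or_ne a 0 with h | h
  · exact ⟨1, by simp [h]⟩
  · refine ⟨(‖a‖ : ℂ) / a, ?_, ?_⟩
    · rw [norm_div, Complex.norm_real, norm_norm, div_self (norm_ne_zero_iff.2 h)]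
    · field_simp

lemma cauchy_est {f : ℂ → ℂ} {c : ℂ} {R M : ℝ} (hR : 0 < R)
    (hd : ∀ w ∈ closedBall c R, DifferentiableAt ℂ f w)
    (hM : ∀ w ∈ closedBall c R, ‖f w‖ ≤ M) : ‖deriv f c‖ ≤ M / R := by
  apply Complex.norm_deriv_le_of_forall_mem_sphere_norm_le hR
  · apply DifferentiableOn.diffContOnCl
    rw [closure_ball c hR.ne']
    exact fun w hw => (hd w hw).differentiableWithinAt
  · exact fun w hw => hM w (sphere_subset_closedBall hw)

lemma mvt_c {f : ℂ → ℂ} {s : Set ℂ} (hs : Convex ℝ s) {C : ℝ}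
    (hd : ∀ w ∈ s, DifferentiableAt ℂ f w)
    (hC : ∀ w ∈ s, ‖deriv f w‖ ≤ C) {a b : ℂ} (ha : a ∈ s) (hb : b ∈ s) :
    ‖f b - f a‖ ≤ C * ‖b - a‖ := by
  refine hs.norm_image_sub_le_of_norm_hasFDerivWithin_le (𝕜 := ℂ)
    (f' := fun w => ContinuousLinearMap.smulRight (1 : ℂ →L[ℂ] ℂ) (deriv f w))
    (fun w hw => ((hd w hw).hasDerivAt.hasFDerivAt).hasFDerivWithinAt)
    (fun w hw => ?_) ha hb
  rw [ContinuousLinearMap.norm_smulRight_apply]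
  simpa using hC w hw

lemma deriv_combo {u v : ℂ → ℂ} {a b : ℂ} {w : ℂ} (hu : DifferentiableAt ℂ u w)
    (hv : DifferentiableAt ℂ v w) :
    deriv (fun z => a * u z + b * v z) w = a * deriv u w + b * deriv v w := by
  rw [deriv_fun_add (hu.const_mul a) (hv.const_mul b), deriv_const_mul a hu, deriv_const_mul b hv]


set_option maxHeartbeats 4000000 in
/-- Invertibility of the KAM coordinate change
`(ξ, η) ↦ (ξ + u(ξ,η), η + v(ξ,η))`: under the smallness bounds on `u, v` and their partial
derivatives on `D₃`, every `(x, y) ∈ D₄` comes from a unique `(ξ, η) ∈ D₃`, with the estimate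
`γ^{ν+κ}|ξ - x| + |η - y| ≤ (ϑ/(1-ϑ)) γ^ν s`. -/
theorem coordinate_change_invertible
    (ν κ γ r s rP sP ϑ : ℝ) (ωbar : ℂ) (u v : ℂ → ℂ → ℂ)
    (hν : 0 ≤ ν) (hκ0 : 0 < κ) (hκ : κ < 1 / 2) (hγ0 : 0 < γ) (hγ1 : γ ≤ 1)
    (hrP : 0 < rP) (hrr : rP < r) (hsP : 0 < sP)
    (h7 : 7 * sP < s) (hsr : s < γ ^ κ / 6 * (r - rP))
    (hϑ0 : 0 ≤ ϑ) (hϑ : ϑ < 1 / 8)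
    (hu : AnalyticOnNhd ℂ (fun z : ℂ × ℂ => u z.1 z.2)
      (Dom (r - 3 * ((r - rP) / 6)) (γ ^ ν * (s - 3 * ((s - sP) / 6))) ωbar))
    (hv : AnalyticOnNhd ℂ (fun z : ℂ × ℂ => v z.1 z.2)
      (Dom (r - 3 * ((r - rP) / 6)) (γ ^ ν * (s - 3 * ((s - sP) / 6))) ωbar))
    (huper : ∀ ξ η : ℂ, u (ξ + 2 * Real.pi) η = u ξ η)
    (hvper : ∀ ξ η : ℂ, v (ξ + 2 * Real.pi) η = v ξ η)
    (hb0 : ∀ z ∈ Dom (r - 3 * ((r - rP) / 6)) (γ ^ ν * (s - 3 * ((s - sP) / 6))) ωbar,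
      γ ^ (ν + κ) * ‖u z.1 z.2‖ + ‖v z.1 z.2‖ ≤ γ ^ ν * ϑ * s)
    (hb1 : ∀ z ∈ Dom (r - 3 * ((r - rP) / 6)) (γ ^ ν * (s - 3 * ((s - sP) / 6))) ωbar,
      γ ^ (ν + κ) * ‖deriv (fun w => u w z.2) z.1‖ +
        ‖deriv (fun w => v w z.2) z.1‖ ≤ γ ^ ν * ϑ)
    (hb2 : ∀ z ∈ Dom (r - 3 * ((r - rP) / 6)) (γ ^ ν * (s - 3 * ((s - sP) / 6))) ωbar,
      γ ^ (ν + κ) * ‖deriv (fun w => u z.1 w) z.2‖ +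
        ‖deriv (fun w => v z.1 w) z.2‖ ≤ ϑ) :
    ∀ z ∈ Dom (r - 4 * ((r - rP) / 6)) (γ ^ ν * (s - 4 * ((s - sP) / 6))) ωbar,
      ∃ w ∈ Dom (r - 3 * ((r - rP) / 6)) (γ ^ ν * (s - 3 * ((s - sP) / 6))) ωbar,
        (z.1 = w.1 + u w.1 w.2 ∧ z.2 = w.2 + v w.1 w.2) ∧
        (γ ^ (ν + κ) * ‖w.1 - z.1‖ + ‖w.2 - z.2‖ ≤
          ϑ / (1 - ϑ) * (γ ^ ν * s)) ∧
        ∀ w' ∈ Dom (r - 3 * ((r - rP) / 6)) (γ ^ ν * (s - 3 * ((s - sP) / 6))) ωbar,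
          (z.1 = w'.1 + u w'.1 w'.2 ∧ z.2 = w'.2 + v w'.1 w'.2) → w' = w := by
  intro z hz
  obtain ⟨hzx, hzy⟩ := hz
  -- abbreviations
  set δ : ℝ := (r - rP) / 6 with hδdef
  set ρ : ℝ := (s - sP) / 6 with hρdef
  set γκ : ℝ := γ ^ κ with hγκdef
  set gν : ℝ := γ ^ ν with hgνdef
  set γc : ℝ := γ ^ (ν + κ) with hγcdef
  -- basic positivity facts
  have hs0 : 0 < s := by nlinarith
  have hγκ0 : 0 < γκ := Real.rpow_pos_of_pos hγ0 κ
  have hγκ1 : γκ ≤ 1 := Real.rpow_le_one hγ0.le hγ1 hκ0.le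
  have hgν0 : 0 < gν := Real.rpow_pos_of_pos hγ0 ν
  have hγc0 : 0 < γc := Real.rpow_pos_of_pos hγ0 (ν + κ)
  have hγcs : γc = gν * γκ := Real.rpow_add hγ0 ν κ
  have hδ0 : 0 < δ := by rw [hδdef]; linarith
  have hρ0 : 0 < ρ := by rw [hρdef]; linarith
  have hsδ : s < γκ * δ := by
    have : γκ / 6 * (r - rP) = γκ * δ := by rw [hδdef]; ring
    linarith [hsr, this]
  set A : ℝ := ϑ * s / γκ with hAdef
  set B : ℝ := gν * ϑ * s with hBdef
  have hA0 : 0 ≤ A := by positivity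
  have hB0 : 0 ≤ B := by positivity
  have hAγ : γκ * A = ϑ * s := by rw [hAdef]; field_simp
  have hsdiv : s / γκ ≤ δ := le_of_lt ((div_lt_iff₀ hγκ0).2 (by linarith))
  have hA8 : A ≤ δ / 8 := by
    have h1 : A = ϑ * (s / γκ) := by rw [hAdef]; ring
    have h2 : 0 ≤ s / γκ := by positivity
    nlinarith
  set δ' : ℝ := δ - A with hδ'def
  have hδ'0 : 0 < δ' := by rw [hδ'def]; linarith
  have hρs : s / 7 < ρ := by rw [hρdef]; linarith
  have hγcA : γc * A = gν * ϑ * s := by rw [hγcs, mul_assoc, hAγ]; ring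
  -- the invariant set
  set X : Set (ℂ × ℂ) := closedBall z.1 A ×ˢ closedBall z.2 B with hXdef
  have hzX : z ∈ X := ⟨mem_closedBall_self hA0, mem_closedBall_self hB0⟩
  have habs_sub : ∀ a b : ℂ, ‖a - b‖ = ‖b - a‖ := by
    intro a b; exact norm_sub_rev a b
  -- membership lemmas
  have hξD : ∀ ζ ∈ closedBall z.1 A, ∀ w ∈ closedBall ζ δ', |w.im| < r - 3 * δ := by
    intro ζ hζ w hw
    rw [mem_closedBall, Complex.dist_eq] at hζ hw
    have h1 : |w.im| ≤ |ζ.im| + ‖w - ζ‖ := by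
      have := Complex.abs_im_le_norm (w - ζ)
      have h2 : w.im = ζ.im + (w - ζ).im := by simp
      rw [h2]
      have := abs_add_le ζ.im (w - ζ).im
      have h3 : |(w - ζ).im| ≤ ‖w - ζ‖ := Complex.abs_im_le_norm _
      linarith
    have h4 : |ζ.im| ≤ |z.1.im| + ‖ζ - z.1‖ := by
      have h2 : ζ.im = z.1.im + (ζ - z.1).im := by simp
      rw [h2]
      have := abs_add_le z.1.im (ζ - z.1).im
      have h3 : |(ζ - z.1).im| ≤ ‖ζ - z.1‖ := Complex.abs_im_le_norm _
      linarith
    have : |w.im| ≤ |z.1.im| + A + δ' := by linarith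
    rw [hδ'def] at this
    linarith
  have hηD : ∀ η ∈ closedBall z.2 B, ‖η - ωbar‖ < gν * (s - 3 * ρ) := by
    intro η hη
    rw [mem_closedBall, Complex.dist_eq] at hη
    have tri : ‖η - ωbar‖ ≤ ‖η - z.2‖ + ‖z.2 - ωbar‖ :=
      norm_sub_le_norm_sub_add_norm_sub η z.2 ωbar
    have hBρ : B < gν * ρ := by
      have h1 : ϑ * s < ρ := by nlinarith
      rw [hBdef]
      nlinarith
    have h2 : gν * (s - 3 * ρ) = gν * (s - 4 * ρ) + gν * ρ := by ring
    linarith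
  have hXD3 : X ⊆ Dom (r - 3 * δ) (gν * (s - 3 * ρ)) ωbar := by
    rintro w ⟨hw1, hw2⟩
    exact ⟨hξD w.1 hw1 w.1 (mem_closedBall_self hδ'0.le) , hηD w.2 hw2⟩
  have hdisk : ∀ ζ ∈ closedBall z.1 A, ∀ η ∈ closedBall z.2 B, ∀ w ∈ closedBall ζ δ',
      ((w, η) : ℂ × ℂ) ∈ Dom (r - 3 * δ) (gν * (s - 3 * ρ)) ωbar := by
    intro ζ hζ η hη w hw
    exact ⟨hξD ζ hζ w hw, hηD η hη⟩
  -- differentiability of slices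
  have huξ : ∀ ζ η : ℂ, ((ζ, η) : ℂ × ℂ) ∈ Dom (r - 3 * δ) (gν * (s - 3 * ρ)) ωbar →
      DifferentiableAt ℂ (fun w => u w η) ζ := by
    intro ζ η hm
    have h1 : AnalyticAt ℂ (fun q : ℂ × ℂ => u q.1 q.2) (ζ, η) := hu _ hm
    have h2 : AnalyticAt ℂ (fun w : ℂ => ((w, η) : ℂ × ℂ)) ζ := analyticAt_id.prod analyticAt_const
    have := (AnalyticAt.comp (f := fun w : ℂ => ((w, η) : ℂ × ℂ)) h1 h2).differentiableAt
    exact this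
  have hvξ : ∀ ζ η : ℂ, ((ζ, η) : ℂ × ℂ) ∈ Dom (r - 3 * δ) (gν * (s - 3 * ρ)) ωbar →
      DifferentiableAt ℂ (fun w => v w η) ζ := by
    intro ζ η hm
    have h1 : AnalyticAt ℂ (fun q : ℂ × ℂ => v q.1 q.2) (ζ, η) := hv _ hm
    have h2 : AnalyticAt ℂ (fun w : ℂ => ((w, η) : ℂ × ℂ)) ζ := analyticAt_id.prod analyticAt_const
    have := (AnalyticAt.comp (f := fun w : ℂ => ((w, η) : ℂ × ℂ)) h1 h2).differentiableAt
    exact this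
  have huη : ∀ ζ η : ℂ, ((ζ, η) : ℂ × ℂ) ∈ Dom (r - 3 * δ) (gν * (s - 3 * ρ)) ωbar →
      DifferentiableAt ℂ (fun w => u ζ w) η := by
    intro ζ η hm
    have h1 : AnalyticAt ℂ (fun q : ℂ × ℂ => u q.1 q.2) (ζ, η) := hu _ hm
    have h2 : AnalyticAt ℂ (fun w : ℂ => ((ζ, w) : ℂ × ℂ)) η := analyticAt_const.prod analyticAt_id
    have := (AnalyticAt.comp (f := fun w : ℂ => ((ζ, w) : ℂ × ℂ)) h1 h2).differentiableAt
    exact this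
  have hvη : ∀ ζ η : ℂ, ((ζ, η) : ℂ × ℂ) ∈ Dom (r - 3 * δ) (gν * (s - 3 * ρ)) ωbar →
      DifferentiableAt ℂ (fun w => v ζ w) η := by
    intro ζ η hm
    have h1 : AnalyticAt ℂ (fun q : ℂ × ℂ => v q.1 q.2) (ζ, η) := hv _ hm
    have h2 : AnalyticAt ℂ (fun w : ℂ => ((ζ, w) : ℂ × ℂ)) η := analyticAt_const.prod analyticAt_id
    have := (AnalyticAt.comp (f := fun w : ℂ => ((ζ, w) : ℂ × ℂ)) h1 h2).differentiableAt
    exact this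
  -- Cauchy-estimate bound on the ξ-derivatives
  have hDξ : ∀ ζ ∈ closedBall z.1 A, ∀ η ∈ closedBall z.2 B,
      γc * ‖deriv (fun w => u w η) ζ‖ +
        ‖deriv (fun w => v w η) ζ‖ ≤ gν * ϑ * s / δ' := by
    intro ζ hζ η hη
    obtain ⟨c₁, hc1, e1⟩ := exists_phase (deriv (fun w => u w η) ζ)
    obtain ⟨c₂, hc2, e2⟩ := exists_phase (deriv (fun w => v w η) ζ)
    set F : ℂ → ℂ := fun w => ((γc : ℝ) : ℂ) * c₁ * u w η + c₂ * v w η with hFdef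
    have hFd : ∀ w ∈ closedBall ζ δ', DifferentiableAt ℂ F w := by
      intro w hw
      have hm := hdisk ζ hζ η hη w hw
      exact ((huξ w η hm).const_mul _).add ((hvξ w η hm).const_mul _)
    have hFM : ∀ w ∈ closedBall ζ δ', ‖F w‖ ≤ gν * ϑ * s := by
      intro w hw
      have hm := hdisk ζ hζ η hη w hw
      have hb := hb0 (w, η) hm
      have h1 : ‖F w‖ ≤ ‖((γc : ℝ) : ℂ) * c₁ * u w η‖ + ‖c₂ * v w η‖ := norm_add_le _ _
      have h2 : ‖((γc : ℝ) : ℂ) * c₁ * u w η‖ = γc * ‖u w η‖ := by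
        simp [norm_mul, hc1, Complex.norm_real, abs_of_nonneg hγc0.le]
      have h3 : ‖c₂ * v w η‖ = ‖v w η‖ := by
        simp [norm_mul, hc2]
      rw [h2, h3] at h1
      exact h1.trans hb
    have hce := cauchy_est hδ'0 hFd hFM
    have hm0 : ((ζ, η) : ℂ × ℂ) ∈ Dom (r - 3 * δ) (gν * (s - 3 * ρ)) ωbar :=
      hdisk ζ hζ η hη ζ (mem_closedBall_self hδ'0.le)
    have hder : deriv F ζ =
        ((γc * ‖deriv (fun w => u w η) ζ‖ +
          ‖deriv (fun w => v w η) ζ‖ : ℝ) : ℂ) := by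
      rw [hFdef]
      rw [deriv_combo (huξ ζ η hm0) (hvξ ζ η hm0)]
      calc ((γc : ℝ) : ℂ) * c₁ * deriv (fun w => u w η) ζ + c₂ * deriv (fun w => v w η) ζ
          = ((γc : ℝ) : ℂ) * (c₁ * deriv (fun w => u w η) ζ) +
            c₂ * deriv (fun w => v w η) ζ := by ring
        _ = ((γc : ℝ) : ℂ) * ((‖deriv (fun w => u w η) ζ‖ : ℝ) : ℂ) +
            ((‖deriv (fun w => v w η) ζ‖ : ℝ) : ℂ) := by rw [e1, e2]
        _ = _ := by push_cast; ring
    have hnn : (0:ℝ) ≤ γc * ‖deriv (fun w => u w η) ζ‖ +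
        ‖deriv (fun w => v w η) ζ‖ := by positivity
    rw [hder] at hce
    rw [Complex.norm_real, Real.norm_eq_abs, abs_of_nonneg hnn] at hce
    exact hce
  -- the combined Lipschitz bound
  have hLip : ∀ w ∈ X, ∀ w' ∈ X,
      γc * ‖u w.1 w.2 - u w'.1 w'.2‖ +
        ‖v w.1 w.2 - v w'.1 w'.2‖ ≤
      gν * ϑ * s / δ' * ‖w.1 - w'.1‖ + ϑ * ‖w.2 - w'.2‖ := by
    rintro w ⟨hw1, hw2⟩ w' ⟨hw1', hw2'⟩
    have stepA : γc * ‖u w.1 w.2 - u w'.1 w.2‖ +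
        ‖v w.1 w.2 - v w'.1 w.2‖ ≤
        gν * ϑ * s / δ' * ‖w.1 - w'.1‖ := by
      obtain ⟨c₁, hc1, e1⟩ := exists_phase (u w.1 w.2 - u w'.1 w.2)
      obtain ⟨c₂, hc2, e2⟩ := exists_phase (v w.1 w.2 - v w'.1 w.2)
      set G : ℂ → ℂ := fun ζ => ((γc : ℝ) : ℂ) * c₁ * u ζ w.2 + c₂ * v ζ w.2 with hGdef
      have hGd : ∀ ζ ∈ closedBall z.1 A, DifferentiableAt ℂ G ζ := by
        intro ζ hζ
        have hm : ((ζ, w.2) : ℂ × ℂ) ∈ Dom (r - 3 * δ) (gν * (s - 3 * ρ)) ωbar :=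
          hXD3 ⟨hζ, hw2⟩
        exact ((huξ ζ w.2 hm).const_mul _).add ((hvξ ζ w.2 hm).const_mul _)
      have hGC : ∀ ζ ∈ closedBall z.1 A, ‖deriv G ζ‖ ≤ gν * ϑ * s / δ' := by
        intro ζ hζ
        have hm : ((ζ, w.2) : ℂ × ℂ) ∈ Dom (r - 3 * δ) (gν * (s - 3 * ρ)) ωbar :=
          hXD3 ⟨hζ, hw2⟩
        rw [hGdef, deriv_combo (huξ ζ w.2 hm) (hvξ ζ w.2 hm)]
        have h1 : ‖((γc : ℝ) : ℂ) * c₁ * deriv (fun w' => u w' w.2) ζ +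
            c₂ * deriv (fun w' => v w' w.2) ζ‖ ≤
            γc * ‖deriv (fun w' => u w' w.2) ζ‖ +
            ‖deriv (fun w' => v w' w.2) ζ‖ := by
          have := norm_add_le (((γc : ℝ) : ℂ) * c₁ * deriv (fun w' => u w' w.2) ζ)
            (c₂ * deriv (fun w' => v w' w.2) ζ)
          have h2 : ‖((γc : ℝ) : ℂ) * c₁ * deriv (fun w' => u w' w.2) ζ‖ =
              γc * ‖deriv (fun w' => u w' w.2) ζ‖ := by
            simp [norm_mul, hc1, Complex.norm_real,
              abs_of_nonneg hγc0.le]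
          have h3 : ‖c₂ * deriv (fun w' => v w' w.2) ζ‖ =
              ‖deriv (fun w' => v w' w.2) ζ‖ := by
            simp [norm_mul, hc2]
          rw [h2, h3] at this
          exact this
        exact h1.trans (hDξ ζ hζ w.2 hw2)
      have hmv := mvt_c (convex_closedBall z.1 A) hGd hGC hw1' hw1
      have hGdiff : G w.1 - G w'.1 =
          ((γc * ‖u w.1 w.2 - u w'.1 w.2‖ +
            ‖v w.1 w.2 - v w'.1 w.2‖ : ℝ) : ℂ) := by
        rw [hGdef]
        calc ((γc : ℝ) : ℂ) * c₁ * u w.1 w.2 + c₂ * v w.1 w.2 -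
            (((γc : ℝ) : ℂ) * c₁ * u w'.1 w.2 + c₂ * v w'.1 w.2)
            = ((γc : ℝ) : ℂ) * (c₁ * (u w.1 w.2 - u w'.1 w.2)) +
              c₂ * (v w.1 w.2 - v w'.1 w.2) := by ring
          _ = ((γc : ℝ) : ℂ) * ((‖u w.1 w.2 - u w'.1 w.2‖ : ℝ) : ℂ) +
              ((‖v w.1 w.2 - v w'.1 w.2‖ : ℝ) : ℂ) := by rw [e1, e2]
          _ = _ := by push_cast; ring
      rw [hGdiff, Complex.norm_real, Real.norm_eq_abs] at hmv
      have hnn : (0:ℝ) ≤ γc * ‖u w.1 w.2 - u w'.1 w.2‖ +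
          ‖v w.1 w.2 - v w'.1 w.2‖ := by positivity
      rw [abs_of_nonneg hnn] at hmv
      exact hmv
    have stepB : γc * ‖u w'.1 w.2 - u w'.1 w'.2‖ +
        ‖v w'.1 w.2 - v w'.1 w'.2‖ ≤ ϑ * ‖w.2 - w'.2‖ := by
      obtain ⟨c₁, hc1, e1⟩ := exists_phase (u w'.1 w.2 - u w'.1 w'.2)
      obtain ⟨c₂, hc2, e2⟩ := exists_phase (v w'.1 w.2 - v w'.1 w'.2)
      set H : ℂ → ℂ := fun η => ((γc : ℝ) : ℂ) * c₁ * u w'.1 η + c₂ * v w'.1 η with hHdef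
      have hHd : ∀ η ∈ closedBall z.2 B, DifferentiableAt ℂ H η := by
        intro η hη
        have hm : ((w'.1, η) : ℂ × ℂ) ∈ Dom (r - 3 * δ) (gν * (s - 3 * ρ)) ωbar :=
          hXD3 ⟨hw1', hη⟩
        exact ((huη w'.1 η hm).const_mul _).add ((hvη w'.1 η hm).const_mul _)
      have hHC : ∀ η ∈ closedBall z.2 B, ‖deriv H η‖ ≤ ϑ := by
        intro η hη
        have hm : ((w'.1, η) : ℂ × ℂ) ∈ Dom (r - 3 * δ) (gν * (s - 3 * ρ)) ωbar :=
          hXD3 ⟨hw1', hη⟩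
        rw [hHdef, deriv_combo (huη w'.1 η hm) (hvη w'.1 η hm)]
        have hb := hb2 (w'.1, η) hm
        have h1 : ‖((γc : ℝ) : ℂ) * c₁ * deriv (fun t => u w'.1 t) η +
            c₂ * deriv (fun t => v w'.1 t) η‖ ≤
            γc * ‖deriv (fun t => u w'.1 t) η‖ +
            ‖deriv (fun t => v w'.1 t) η‖ := by
          have := norm_add_le (((γc : ℝ) : ℂ) * c₁ * deriv (fun t => u w'.1 t) η)
            (c₂ * deriv (fun t => v w'.1 t) η)
          have h2 : ‖((γc : ℝ) : ℂ) * c₁ * deriv (fun t => u w'.1 t) η‖ =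
              γc * ‖deriv (fun t => u w'.1 t) η‖ := by
            simp [norm_mul, hc1, Complex.norm_real,
              abs_of_nonneg hγc0.le]
          have h3 : ‖c₂ * deriv (fun t => v w'.1 t) η‖ =
              ‖deriv (fun t => v w'.1 t) η‖ := by
            simp [norm_mul, hc2]
          rw [h2, h3] at this
          exact this
        exact h1.trans hb
      have hmv := mvt_c (convex_closedBall z.2 B) hHd hHC hw2' hw2
      have hHdiff : H w.2 - H w'.2 =
          ((γc * ‖u w'.1 w.2 - u w'.1 w'.2‖ +
            ‖v w'.1 w.2 - v w'.1 w'.2‖ : ℝ) : ℂ) := by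
        rw [hHdef]
        calc ((γc : ℝ) : ℂ) * c₁ * u w'.1 w.2 + c₂ * v w'.1 w.2 -
            (((γc : ℝ) : ℂ) * c₁ * u w'.1 w'.2 + c₂ * v w'.1 w'.2)
            = ((γc : ℝ) : ℂ) * (c₁ * (u w'.1 w.2 - u w'.1 w'.2)) +
              c₂ * (v w'.1 w.2 - v w'.1 w'.2) := by ring
          _ = ((γc : ℝ) : ℂ) * ((‖u w'.1 w.2 - u w'.1 w'.2‖ : ℝ) : ℂ) +
              ((‖v w'.1 w.2 - v w'.1 w'.2‖ : ℝ) : ℂ) := by rw [e1, e2]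
          _ = _ := by push_cast; ring
      rw [hHdiff, Complex.norm_real, Real.norm_eq_abs] at hmv
      have hnn : (0:ℝ) ≤ γc * ‖u w'.1 w.2 - u w'.1 w'.2‖ +
          ‖v w'.1 w.2 - v w'.1 w'.2‖ := by positivity
      rw [abs_of_nonneg hnn] at hmv
      exact hmv
    have tru : ‖u w.1 w.2 - u w'.1 w'.2‖ ≤
        ‖u w.1 w.2 - u w'.1 w.2‖ + ‖u w'.1 w.2 - u w'.1 w'.2‖ :=
      norm_sub_le_norm_sub_add_norm_sub _ _ _
    have trv : ‖v w.1 w.2 - v w'.1 w'.2‖ ≤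
        ‖v w.1 w.2 - v w'.1 w.2‖ + ‖v w'.1 w.2 - v w'.1 w'.2‖ :=
      norm_sub_le_norm_sub_add_norm_sub _ _ _
    nlinarith [hγc0]
  -- the contraction estimate with constant 1/7
  have hKξ : gν * ϑ * s / δ' ≤ 1 / 7 * γc := by
    rw [div_le_iff₀ hδ'0]
    have h8 : 8 * (ϑ * s) ≤ γκ * δ := by nlinarith
    have hγκδ' : γκ * δ' = γκ * δ - ϑ * s := by rw [hδ'def]; rw [mul_sub, hAγ]
    rw [hγcs]
    nlinarith [hgν0.le, hs0.le]
  have hC7 : ∀ w ∈ X, ∀ w' ∈ X,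
      γc * ‖u w.1 w.2 - u w'.1 w'.2‖ +
        ‖v w.1 w.2 - v w'.1 w'.2‖ ≤
      1 / 7 * (γc * ‖w.1 - w'.1‖ + ‖w.2 - w'.2‖) := by
    intro w hw w' hw'
    have h1 := hLip w hw w' hw'
    have h2 : gν * ϑ * s / δ' * ‖w.1 - w'.1‖ ≤
        1 / 7 * γc * ‖w.1 - w'.1‖ :=
      mul_le_mul_of_nonneg_right hKξ (norm_nonneg _)
    have h3 : ϑ * ‖w.2 - w'.2‖ ≤ 1 / 7 * ‖w.2 - w'.2‖ :=
      mul_le_mul_of_nonneg_right (by linarith) (norm_nonneg _)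
    linarith
  -- the iteration map
  set Φ : ℂ × ℂ → ℂ × ℂ := fun w => (z.1 - u w.1 w.2, z.2 - v w.1 w.2) with hΦdef
  have hΦX : ∀ w ∈ X, Φ w ∈ X := by
    intro w hw
    have h0 := hb0 w (hXD3 hw)
    constructor
    · rw [mem_closedBall, Complex.dist_eq]
      have h1 : (Φ w).1 - z.1 = -(u w.1 w.2) := by rw [hΦdef]; ring
      rw [h1, norm_neg]
      have h2 : γc * ‖u w.1 w.2‖ ≤ γc * A := by
        rw [hγcA]; linarith [norm_nonneg (v w.1 w.2)]
      exact le_of_mul_le_mul_left h2 hγc0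
    · rw [mem_closedBall, Complex.dist_eq]
      have h1 : (Φ w).2 - z.2 = -(v w.1 w.2) := by rw [hΦdef]; ring
      rw [h1, norm_neg]
      have h2 : 0 ≤ γc * ‖u w.1 w.2‖ := by positivity
      rw [hBdef]; linarith
  obtain ⟨p, hp0, hps⟩ : ∃ p : ℕ → ℂ × ℂ, p 0 = z ∧ ∀ n, p (n + 1) = Φ (p n) :=
    ⟨fun n => Φ^[n] z, rfl, fun n => Function.iterate_succ_apply' Φ n z⟩
  have hpX : ∀ n, p n ∈ X := by
    intro n
    induction n with
    | zero => rw [hp0]; exact hzX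
    | succ n ih => rw [hps]; exact hΦX _ ih
  have hgeom : ∀ n, γc * ‖(p n).1 - (p (n + 1)).1‖ +
      ‖(p n).2 - (p (n + 1)).2‖ ≤ (1 / 7 : ℝ) ^ n * (gν * ϑ * s) := by
    intro n
    induction n with
    | zero =>
      have h0 := hb0 z (hXD3 hzX)
      have h1 : (p 0).1 - (p 1).1 = u z.1 z.2 := by
        rw [hps 0, hp0]; show z.1 - (Φ z).1 = _; rw [hΦdef]; ring
      have h2 : (p 0).2 - (p 1).2 = v z.1 z.2 := by
        rw [hps 0, hp0]; show z.2 - (Φ z).2 = _; rw [hΦdef]; ring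
      rw [h1, h2]; simpa using h0
    | succ n ih =>
      have h1 : (p (n + 1)).1 - (p (n + 2)).1 =
          u (p (n + 1)).1 (p (n + 1)).2 - u (p n).1 (p n).2 := by
        rw [hps (n + 1), hps n, hΦdef]; ring
      have h2 : (p (n + 1)).2 - (p (n + 2)).2 =
          v (p (n + 1)).1 (p (n + 1)).2 - v (p n).1 (p n).2 := by
        rw [hps (n + 1), hps n, hΦdef]; ring
      have h3 := hC7 (p (n + 1)) (hpX (n + 1)) (p n) (hpX n)
      rw [h1, h2]
      have h4 : ‖(p (n + 1)).1 - (p n).1‖ =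
          ‖(p n).1 - (p (n + 1)).1‖ := habs_sub _ _
      have h5 : ‖(p (n + 1)).2 - (p n).2‖ =
          ‖(p n).2 - (p (n + 1)).2‖ := habs_sub _ _
      rw [h4, h5] at h3
      have h6 : (1 / 7 : ℝ) ^ (n + 1) * (gν * ϑ * s) =
          1 / 7 * ((1 / 7 : ℝ) ^ n * (gν * ϑ * s)) := by ring
      rw [h6]
      calc γc * ‖u (p (n + 1)).1 (p (n + 1)).2 - u (p n).1 (p n).2‖ +
          ‖v (p (n + 1)).1 (p (n + 1)).2 - v (p n).1 (p n).2‖ ≤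
          1 / 7 * (γc * ‖(p n).1 - (p (n + 1)).1‖ +
            ‖(p n).2 - (p (n + 1)).2‖) := h3
        _ ≤ 1 / 7 * ((1 / 7 : ℝ) ^ n * (gν * ϑ * s)) := by linarith
  have hCauchy : CauchySeq p := by
    apply cauchySeq_of_le_geometric (1 / 7 : ℝ) ((1 / γc + 1) * (gν * ϑ * s)) (by norm_num)
    intro n
    have hg := hgeom n
    rw [Prod.dist_eq]
    have hD0 : (0:ℝ) ≤ gν * ϑ * s := by positivity
    have hpow : (0:ℝ) ≤ (1 / 7 : ℝ) ^ n := by positivity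
    apply max_le
    · rw [Complex.dist_eq]
      have h1 : γc * ‖(p n).1 - (p (n + 1)).1‖ ≤ (1 / 7 : ℝ) ^ n * (gν * ϑ * s) := by
        linarith [norm_nonneg ((p n).2 - (p (n + 1)).2)]
      have h2 : ‖(p n).1 - (p (n + 1)).1‖ ≤
          (1 / 7 : ℝ) ^ n * (gν * ϑ * s) / γc := by
        rw [le_div_iff₀ hγc0]; linarith
      calc ‖(p n).1 - (p (n + 1)).1‖ ≤ (1 / 7 : ℝ) ^ n * (gν * ϑ * s) / γc := h2
        _ = 1 / γc * (gν * ϑ * s * (1 / 7 : ℝ) ^ n) := by ring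
        _ ≤ (1 / γc + 1) * (gν * ϑ * s) * (1 / 7 : ℝ) ^ n := by
          have hXY : (0:ℝ) ≤ gν * ϑ * s * (1 / 7 : ℝ) ^ n := mul_nonneg hD0 hpow
          nlinarith [hXY]
    · rw [Complex.dist_eq]
      have h1 : ‖(p n).2 - (p (n + 1)).2‖ ≤ (1 / 7 : ℝ) ^ n * (gν * ϑ * s) := by
        have : (0:ℝ) ≤ γc * ‖(p n).1 - (p (n + 1)).1‖ := by positivity
        linarith
      calc ‖(p n).2 - (p (n + 1)).2‖ ≤ (1 / 7 : ℝ) ^ n * (gν * ϑ * s) := h1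
        _ ≤ (1 / γc + 1) * (gν * ϑ * s) * (1 / 7 : ℝ) ^ n := by
          have hXY : (0:ℝ) ≤ 1 / γc * (gν * ϑ * s * (1 / 7 : ℝ) ^ n) := by positivity
          nlinarith [hXY]
  obtain ⟨w, hwlim⟩ := cauchySeq_tendsto_of_complete hCauchy
  have hXc : IsClosed X := IsClosed.prod isClosed_closedBall isClosed_closedBall
  have hwX : w ∈ X := hXc.mem_of_tendsto hwlim (Filter.Eventually.of_forall hpX)
  have hwD3 : w ∈ Dom (r - 3 * δ) (gν * (s - 3 * ρ)) ωbar := hXD3 hwX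
  have hfix : Φ w = w := by
    have hcu : ContinuousAt (fun q : ℂ × ℂ => u q.1 q.2) w := (hu w hwD3).continuousAt
    have hcv : ContinuousAt (fun q : ℂ × ℂ => v q.1 q.2) w := (hv w hwD3).continuousAt
    have hΦc : ContinuousAt Φ w := by
      rw [hΦdef]
      exact ContinuousAt.prodMk (continuousAt_const.sub hcu) (continuousAt_const.sub hcv)
    have h1 : Filter.Tendsto (fun n => Φ (p n)) Filter.atTop (nhds (Φ w)) :=
      hΦc.tendsto.comp hwlim
    have h2 : Filter.Tendsto (fun n => p (n + 1)) Filter.atTop (nhds w) :=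
      (Filter.tendsto_add_atTop_iff_nat 1).2 hwlim
    have h3 : (fun n => Φ (p n)) = fun n => p (n + 1) := funext fun n => (hps n).symm
    rw [h3] at h1
    exact tendsto_nhds_unique h1 h2
  have he1 : w.1 = z.1 - u w.1 w.2 := (congrArg Prod.fst hfix).symm
  have he2 : w.2 = z.2 - v w.1 w.2 := (congrArg Prod.snd hfix).symm
  have h0w := hb0 w hwD3
  refine ⟨w, hwD3, ⟨?_, ?_⟩, ?_, ?_⟩
  · linear_combination -he1
  · linear_combination -he2
  · have hd1 : w.1 - z.1 = -(u w.1 w.2) := by linear_combination he1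
    have hd2 : w.2 - z.2 = -(v w.1 w.2) := by linear_combination he2
    rw [hd1, hd2, norm_neg, norm_neg]
    have h1ϑ : 0 < 1 - ϑ := by linarith
    have hϑle : ϑ ≤ ϑ / (1 - ϑ) := by
      rw [le_div_iff₀ h1ϑ]; nlinarith
    have h2 : gν * ϑ * s = ϑ * (gν * s) := by ring
    have h3 : ϑ * (gν * s) ≤ ϑ / (1 - ϑ) * (gν * s) :=
      mul_le_mul_of_nonneg_right hϑle (by positivity)
    linarith
  · rintro w' hw'D3 ⟨he1', he2'⟩
    have hf1 : w'.1 = z.1 - u w'.1 w'.2 := by linear_combination -he1'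
    have hf2 : w'.2 = z.2 - v w'.1 w'.2 := by linear_combination -he2'
    have h0' := hb0 w' hw'D3
    have hw'X : w' ∈ X := by
      constructor
      · rw [mem_closedBall, Complex.dist_eq]
        have h1 : w'.1 - z.1 = -(u w'.1 w'.2) := by linear_combination hf1
        rw [h1, norm_neg]
        have h2 : γc * ‖u w'.1 w'.2‖ ≤ γc * A := by
          rw [hγcA]; linarith [norm_nonneg (v w'.1 w'.2)]
        exact le_of_mul_le_mul_left h2 hγc0
      · rw [mem_closedBall, Complex.dist_eq]
        have h1 : w'.2 - z.2 = -(v w'.1 w'.2) := by linear_combination hf2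
        rw [h1, norm_neg]
        have h2 : 0 ≤ γc * ‖u w'.1 w'.2‖ := by positivity
        rw [hBdef]; linarith
    have hc := hC7 w' hw'X w hwX
    have hg1 : w'.1 - w.1 = u w.1 w.2 - u w'.1 w'.2 := by linear_combination hf1 - he1
    have hg2 : w'.2 - w.2 = v w.1 w.2 - v w'.1 w'.2 := by linear_combination hf2 - he2
    have hs1 : ‖u w'.1 w'.2 - u w.1 w.2‖ = ‖w'.1 - w.1‖ := by
      rw [hg1, habs_sub]
    have hs2 : ‖v w'.1 w'.2 - v w.1 w.2‖ = ‖w'.2 - w.2‖ := by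
      rw [hg2, habs_sub]
    rw [hs1, hs2] at hc
    have ha1 : 0 ≤ ‖w'.1 - w.1‖ := norm_nonneg _
    have ha2 : 0 ≤ ‖w'.2 - w.2‖ := norm_nonneg _
    have hz1 : ‖w'.1 - w.1‖ = 0 := by nlinarith
    have hz2 : ‖w'.2 - w.2‖ = 0 := by nlinarith
    have hq1 : w'.1 = w.1 := sub_eq_zero.1 (norm_eq_zero.1 hz1)
    have hq2 : w'.2 = w.2 := sub_eq_zero.1 (norm_eq_zero.1 hz2)
    exact Prod.ext hq1 hq2
end

section
/- Let n ≥ 1 be an integer. Every solution of the planar autonomous system ẋ = y, ẏ = −x^{2n+1} with initial value (x(0), y(0)) ≠ (0, 0) is periodic. In particular, the solution (C(t), S(t)) with initial value (C(0), S(0)) = (1, 0) is periodic with some minimal period T* > 0. -/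
open Set

private lemma aux_abs_pow_sub_pow_le (k : ℕ) {a b R : ℝ} (ha : |a| ≤ R) (hb : |b| ≤ R) :
    |a ^ (k + 1) - b ^ (k + 1)| ≤ (k + 1) * R ^ k * |a - b| := by
  induction k with
  | zero => simp
  | succ k ih =>
    have hR : 0 ≤ R := le_trans (abs_nonneg a) ha
    have key : a ^ (k + 2) - b ^ (k + 2) = a * (a ^ (k + 1) - b ^ (k + 1)) + (a - b) * b ^ (k + 1) := by
      ring
    calc |a ^ (k + 2) - b ^ (k + 2)|
        ≤ |a| * |a ^ (k + 1) - b ^ (k + 1)| + |a - b| * |b| ^ (k + 1) := by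
          rw [key]
          refine le_trans (abs_add_le _ _) ?_
          rw [abs_mul, abs_mul, abs_pow]
      _ ≤ R * ((k + 1) * R ^ k * |a - b|) + |a - b| * R ^ (k + 1) := by
          gcongr
      _ = (↑(k + 1) + 1) * R ^ (k + 1) * |a - b| := by
          push_cast
          rw [pow_succ]
          ring

private lemma aux_energy (n : ℕ) (x y : ℝ → ℝ)
    (hx : ∀ t, HasDerivAt x (y t) t)
    (hy : ∀ t, HasDerivAt y (-(x t ^ (2 * n + 1))) t) (t : ℝ) :
    (n + 1 : ℝ) * (y t) ^ 2 + (x t) ^ (2 * n + 2)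
      = (n + 1 : ℝ) * (y 0) ^ 2 + (x 0) ^ (2 * n + 2) := by
  set E : ℝ → ℝ := fun t => (n + 1 : ℝ) * (y t) ^ 2 + (x t) ^ (2 * n + 2) with hE
  have hder : ∀ t, HasDerivAt E 0 t := by
    intro t
    have h1 : HasDerivAt (fun t => (y t) ^ 2) ((2 : ℝ) * y t ^ (2 - 1) * (-(x t ^ (2 * n + 1)))) t :=
      (hy t).pow 2
    have h2 : HasDerivAt (fun t => (x t) ^ (2 * n + 2))
        ((↑(2 * n + 2) : ℝ) * x t ^ (2 * n + 2 - 1) * y t) t := (hx t).pow (2 * n + 2)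
    have h3 := (h1.const_mul ((n : ℝ) + 1)).add h2
    have harith : 2 * n + 2 - 1 = 2 * n + 1 := by omega
    rw [harith] at h2 h3
    refine h3.congr_deriv ?_
    push_cast
    ring
  have := is_const_of_deriv_eq_zero (f := E) (fun s => (hder s).differentiableAt)
    (fun s => (hder s).deriv) t 0
  exact this

private lemma aux_bound (n : ℕ) (x y : ℝ → ℝ)
    (hx : ∀ t, HasDerivAt x (y t) t)
    (hy : ∀ t, HasDerivAt y (-(x t ^ (2 * n + 1))) t) :
    ∃ R : ℝ, 1 ≤ R ∧ ∀ t, |x t| ≤ R ∧ |y t| ≤ R := by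
  set E0 : ℝ := (n + 1 : ℝ) * (y 0) ^ 2 + (x 0) ^ (2 * n + 2) with hE0
  have hx0even : ∀ s : ℝ, (0:ℝ) ≤ s ^ (2 * n + 2) := by
    intro s
    have : s ^ (2 * n + 2) = (s ^ (n + 1)) ^ 2 := by
      rw [← pow_mul]; congr 1; omega
    rw [this]; positivity
  have hE0nn : 0 ≤ E0 := by
    have := hx0even (x 0); positivity
  refine ⟨max 1 E0, le_max_left _ _, fun t => ?_⟩
  have hen := aux_energy n x y hx hy t
  constructor
  · rcases le_or_gt (|x t|) 1 with h | h
    · exact le_trans h (le_max_left _ _)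
    · have h1 : |x t| ≤ |x t| ^ (2 * n + 2) := le_self_pow₀ h.le (by omega)
      have h2 : |x t| ^ (2 * n + 2) = x t ^ (2 * n + 2) := by
        rw [← abs_pow, abs_of_nonneg (hx0even (x t))]
      have h3 : x t ^ (2 * n + 2) ≤ E0 := by nlinarith [sq_nonneg (y t)]
      exact le_trans (h1.trans (h2.le.trans h3)) (le_max_right _ _)
  · rcases le_or_gt (|y t|) 1 with h | h
    · exact le_trans h (le_max_left _ _)
    · have h1 : |y t| ≤ |y t| ^ 2 := le_self_pow₀ h.le (by omega)
      have h2 : |y t| ^ 2 = y t ^ 2 := sq_abs _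
      have h3 : y t ^ 2 ≤ E0 := by nlinarith [hx0even (x t), sq_nonneg (y t)]
      exact le_trans (h1.trans (h2.le.trans h3)) (le_max_right _ _)

private lemma aux_uniq (n : ℕ) (x y u w : ℝ → ℝ)
    (hx : ∀ t, HasDerivAt x (y t) t)
    (hy : ∀ t, HasDerivAt y (-(x t ^ (2 * n + 1))) t)
    (hu : ∀ t, HasDerivAt u (w t) t)
    (hw : ∀ t, HasDerivAt w (-(u t ^ (2 * n + 1))) t)
    (t₀ : ℝ) (hxe : x t₀ = u t₀) (hye : y t₀ = w t₀) :
    ∀ t, x t = u t ∧ y t = w t := by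
  obtain ⟨R₁, hR₁, hb₁⟩ := aux_bound n x y hx hy
  obtain ⟨R₂, hR₂, hb₂⟩ := aux_bound n u w hu hw
  set R : ℝ := max R₁ R₂ with hR
  have hR1 : (1 : ℝ) ≤ R := le_trans hR₁ (le_max_left _ _)
  have hR0 : (0 : ℝ) ≤ R := le_trans zero_le_one hR1
  set v : ℝ → ℝ × ℝ → ℝ × ℝ := fun _ p => (p.2, -(p.1 ^ (2 * n + 1))) with hv
  set s : Set (ℝ × ℝ) := {p | |p.1| ≤ R ∧ |p.2| ≤ R} with hs
  set K : NNReal := ⟨(2 * n + 1 : ℝ) * R ^ (2 * n) + 1, by positivity⟩ with hK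
  have hKcoe : (K : ℝ) = (2 * n + 1 : ℝ) * R ^ (2 * n) + 1 := rfl
  have hK1 : (1 : ℝ) ≤ (K : ℝ) := by
    rw [hKcoe]
    have : (0:ℝ) ≤ (2 * n + 1 : ℝ) * R ^ (2 * n) := by positivity
    linarith
  have hlip : ∀ t : ℝ, LipschitzOnWith K (v t) s := by
    intro t
    rw [lipschitzOnWith_iff_dist_le_mul]
    rintro p ⟨hp1, hp2⟩ q ⟨hq1, hq2⟩
    rw [Prod.dist_eq, Prod.dist_eq]
    simp only [hv, Real.dist_eq]
    have hd0 : (0:ℝ) ≤ max |p.1 - q.1| |p.2 - q.2| := le_max_of_le_left (abs_nonneg _)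
    apply max_le
    · calc |p.2 - q.2| ≤ max |p.1 - q.1| |p.2 - q.2| := le_max_right _ _
        _ ≤ K * max |p.1 - q.1| |p.2 - q.2| := le_mul_of_one_le_left hd0 hK1
    · have heq : -(p.1 ^ (2 * n + 1)) - -(q.1 ^ (2 * n + 1)) = -(p.1 ^ (2 * n + 1) - q.1 ^ (2 * n + 1)) := by ring
      rw [heq, abs_neg]
      have h2n : 2 * n + 1 = (2 * n) + 1 := rfl
      calc |p.1 ^ (2 * n + 1) - q.1 ^ (2 * n + 1)|
          ≤ (2 * n + 1 : ℝ) * R ^ (2 * n) * |p.1 - q.1| := by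
            have := aux_abs_pow_sub_pow_le (2 * n) hp1 hq1
            push_cast at this ⊢
            exact this
        _ ≤ (K : ℝ) * max |p.1 - q.1| |p.2 - q.2| := by
            rw [hKcoe]
            have h1 : |p.1 - q.1| ≤ max |p.1 - q.1| |p.2 - q.2| := le_max_left _ _
            have h2 : (0:ℝ) ≤ (2 * n + 1 : ℝ) * R ^ (2 * n) := by positivity
            nlinarith [abs_nonneg (p.1 - q.1)]
  intro t
  set F : ℝ → ℝ × ℝ := fun τ => (x τ, y τ) with hF
  set G : ℝ → ℝ × ℝ := fun τ => (u τ, w τ) with hG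
  set a : ℝ := min t t₀ - 1 with ha
  set b : ℝ := max t t₀ + 1 with hb
  have hta : t ∈ Ioo a b :=
    ⟨by have := min_le_left t t₀; simp only [ha]; linarith,
     by have := le_max_left t t₀; simp only [hb]; linarith⟩
  have ht₀ : t₀ ∈ Ioo a b :=
    ⟨by have := min_le_right t t₀; simp only [ha]; linarith,
     by have := le_max_right t t₀; simp only [hb]; linarith⟩
  have hFd : ∀ τ ∈ Ioo a b, HasDerivAt F (v τ (F τ)) τ ∧ F τ ∈ s := by
    intro τ _
    refine ⟨(hx τ).prodMk (hy τ), ⟨le_trans (hb₁ τ).1 (le_max_left _ _), le_trans (hb₁ τ).2 (le_max_left _ _)⟩⟩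
  have hGd : ∀ τ ∈ Ioo a b, HasDerivAt G (v τ (G τ)) τ ∧ G τ ∈ s := by
    intro τ _
    refine ⟨(hu τ).prodMk (hw τ), ⟨le_trans (hb₂ τ).1 (le_max_right _ _), le_trans (hb₂ τ).2 (le_max_right _ _)⟩⟩
  have heq : F t₀ = G t₀ := by simp [hF, hG, hxe, hye]
  have := ODE_solution_unique_of_mem_Ioo (fun t _ => hlip t) ht₀ hFd hGd heq hta
  have hxy : (x t, y t) = (u t, w t) := this
  exact ⟨congrArg Prod.fst hxy, congrArg Prod.snd hxy⟩

private lemma aux_reflect (n : ℕ) (x y : ℝ → ℝ)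
    (hx : ∀ t, HasDerivAt x (y t) t)
    (hy : ∀ t, HasDerivAt y (-(x t ^ (2 * n + 1))) t)
    (t₀ : ℝ) (h0 : y t₀ = 0) :
    ∀ t, x t = x (2 * t₀ - t) ∧ y t = -(y (2 * t₀ - t)) := by
  set u : ℝ → ℝ := fun s => x (2 * t₀ - s) with hu
  set w : ℝ → ℝ := fun s => -(y (2 * t₀ - s)) with hw
  have hinner : ∀ s : ℝ, HasDerivAt (fun s : ℝ => 2 * t₀ - s) (-1) s := by
    intro s
    simpa using (hasDerivAt_id' s).const_sub (2 * t₀)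
  have hud : ∀ s, HasDerivAt u (w s) s := by
    intro s
    have := (hx (2 * t₀ - s)).comp s (hinner s)
    simpa [hu, hw, Function.comp_def] using this
  have hwd : ∀ s, HasDerivAt w (-(u s ^ (2 * n + 1))) s := by
    intro s
    have := ((hy (2 * t₀ - s)).comp s (hinner s)).neg
    simpa [hu, hw, Function.comp_def, Pi.neg_def] using this
  have key : 2 * t₀ - t₀ = t₀ := by ring
  have h1 : x t₀ = u t₀ := by simp [hu, key]
  have h2 : y t₀ = w t₀ := by simp [hw, key, h0]
  exact aux_uniq n x y u w hx hy hud hwd t₀ h1 h2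

private lemma aux_linear {f f' : ℝ → ℝ} (hf : ∀ t, HasDerivAt f (f' t) t)
    {b c : ℝ} (h : ∀ t, b ≤ t → c ≤ f' t) :
    ∀ t, b ≤ t → f b + c * (t - b) ≤ f t := by
  intro t hbt
  set g : ℝ → ℝ := fun t => f t - c * t with hg
  have hgd : ∀ s, HasDerivAt g (f' s - c) s := by
    intro s
    have := (hf s).sub ((hasDerivAt_id' s).const_mul c)
    simp only [mul_one] at this
    exact this
  have hgc : Continuous g :=
    continuous_iff_continuousAt.mpr fun s => (hgd s).continuousAt
  have hmono : MonotoneOn g (Ici b) := by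
    apply monotoneOn_of_deriv_nonneg (convex_Ici b) hgc.continuousOn
    · exact fun s _ => (hgd s).differentiableAt.differentiableWithinAt
    · intro s hs
      rw [interior_Ici] at hs
      rw [(hgd s).deriv]
      have := h s (le_of_lt hs)
      linarith
  have := hmono (self_mem_Ici) (mem_Ici.mpr hbt) hbt
  simp only [hg] at this
  linarith

private lemma aux_no_pos (n : ℕ) (x y : ℝ → ℝ)
    (hx : ∀ t, HasDerivAt x (y t) t)
    (hy : ∀ t, HasDerivAt y (-(x t ^ (2 * n + 1))) t)
    (a : ℝ) (hpos : ∀ t, a < t → 0 < y t) : False := by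
  have hodd : Odd (2 * n + 1) := ⟨n, by ring⟩
  by_cases hneg : ∀ t, a < t → x t < 0
  · -- x always negative: y is increasing, so x grows linearly to +∞, contradiction
    set b : ℝ := a + 1 with hb
    have hyinc : ∀ t, b ≤ t → y b ≤ y t := by
      have := aux_linear (f := y) (f' := fun t => -(x t ^ (2 * n + 1))) hy
        (b := b) (c := 0) (fun t ht => by
          have hxneg : x t < 0 := hneg t (by simp [hb] at ht ⊢; linarith)
          have := hodd.pow_neg hxneg
          show (0:ℝ) ≤ -(x t ^ (2 * n + 1))
          linarith)
      intro t ht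
      have := this t ht
      linarith
    have hc₀ : 0 < y b := hpos b (by simp [hb])
    have hxlin := aux_linear (f := x) (f' := y) hx (b := b) (c := y b) hyinc
    set t : ℝ := b + (1 + |x b|) / y b with ht
    have htb : b ≤ t := by
      have : 0 ≤ (1 + |x b|) / y b := by positivity
      simp [ht]; linarith
    have h1 := hxlin t htb
    have h2 : y b * (t - b) = 1 + |x b| := by
      rw [ht]
      field_simp
      ring
    have h3 : x t < 0 := hneg t (by simp [hb] at htb ⊢; linarith)
    have h4 : -|x b| ≤ x b := neg_abs_le _
    rw [h2] at h1
    linarith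
  · -- x eventually nonneg: x strictly increasing, then y decreases linearly, contradiction
    push_neg at hneg
    obtain ⟨t₂, ht₂a, ht₂⟩ := hneg
    have hxc : Continuous x := continuous_iff_continuousAt.mpr fun s => (hx s).continuousAt
    have hxmono : StrictMonoOn x (Ici t₂) := by
      apply strictMonoOn_of_deriv_pos (convex_Ici t₂) hxc.continuousOn
      intro s hs
      rw [interior_Ici] at hs
      rw [(hx s).deriv]
      exact hpos s (lt_trans ht₂a hs)
    set b : ℝ := t₂ + 1 with hb
    have hxb : 0 < x b := lt_of_le_of_lt ht₂ (hxmono self_mem_Ici (by simp [hb]) (by simp [hb]))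
    have hbt₂ : t₂ ≤ b := by rw [hb]; linarith
    have hxge : ∀ t, b ≤ t → x b ≤ x t := by
      intro t ht
      rcases eq_or_lt_of_le ht with h | h
      · rw [← h]
      · exact le_of_lt (hxmono (mem_Ici.mpr hbt₂) (mem_Ici.mpr (le_trans hbt₂ ht)) h)
    set c : ℝ := x b ^ (2 * n + 1) with hc
    have hcpos : 0 < c := pow_pos hxb _
    have hylin := aux_linear (f := fun t => -(y t)) (f' := fun t => -(-(x t ^ (2 * n + 1)))) 
      (fun t => (hy t).neg) (b := b) (c := c) (fun t ht => by
        show c ≤ -(-(x t ^ (2 * n + 1)))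
        rw [neg_neg, hc]
        exact pow_le_pow_left₀ (le_of_lt hxb) (hxge t ht) _)
    set t : ℝ := b + (1 + |y b|) / c with ht
    have htb : b ≤ t := by
      have : 0 ≤ (1 + |y b|) / c := by positivity
      simp [ht]; linarith
    have h1 := hylin t htb
    have h2 : c * (t - b) = 1 + |y b| := by
      rw [ht]; field_simp; ring
    rw [h2] at h1
    have h3 : 0 < y t := hpos t (by simp [hb] at htb ⊢; linarith)
    have h4 : y b ≤ |y b| := le_abs_self _
    linarith

private lemma aux_exists_zero (n : ℕ) (x y : ℝ → ℝ)
    (hx : ∀ t, HasDerivAt x (y t) t)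
    (hy : ∀ t, HasDerivAt y (-(x t ^ (2 * n + 1))) t)
    (a : ℝ) : ∃ t, a < t ∧ y t = 0 := by
  by_contra hcon
  push_neg at hcon
  have hyc : Continuous y := continuous_iff_continuousAt.mpr fun s => (hy s).continuousAt
  have hsign : (∀ t, a < t → 0 < y t) ∨ (∀ t, a < t → y t < 0) := by
    by_contra hs
    push_neg at hs
    obtain ⟨⟨t₁, ht₁a, ht₁⟩, ⟨t₂, ht₂a, ht₂⟩⟩ := hs
    have h1 : y t₁ < 0 := lt_of_le_of_ne ht₁ (hcon t₁ ht₁a)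
    have h2 : 0 < y t₂ := lt_of_le_of_ne ht₂ (Ne.symm (hcon t₂ ht₂a))
    rcases le_total t₁ t₂ with h | h
    · have := intermediate_value_Icc h hyc.continuousOn (Set.mem_Icc.mpr ⟨le_of_lt h1, le_of_lt h2⟩)
      obtain ⟨c, hc, hyc0⟩ := this
      exact hcon c (lt_of_lt_of_le ht₁a hc.1) hyc0
    · have := intermediate_value_Icc' h hyc.continuousOn (Set.mem_Icc.mpr ⟨le_of_lt h1, le_of_lt h2⟩)
      obtain ⟨c, hc, hyc0⟩ := this
      exact hcon c (lt_of_lt_of_le ht₂a hc.1) hyc0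
  rcases hsign with hp | hn
  · exact aux_no_pos n x y hx hy a hp
  · -- apply positive case to (-x, -y)
    have hodd : Odd (2 * n + 1) := ⟨n, by ring⟩
    have hx' : ∀ t, HasDerivAt (fun t => -(x t)) ((fun t => -(y t)) t) t := fun t => (hx t).neg
    have hy' : ∀ t, HasDerivAt (fun t => -(y t)) (-((fun t => -(x t)) t ^ (2 * n + 1))) t := by
      intro t
      have := (hy t).neg
      have heq : -(-(x t ^ (2 * n + 1))) = -((-(x t)) ^ (2 * n + 1)) := by
        rw [hodd.neg_pow]
      rw [heq] at this
      exact this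
    exact aux_no_pos n (fun t => -(x t)) (fun t => -(y t)) hx' hy' a
      (fun t ht => by have := hn t ht; show 0 < -(y t); linarith)

private lemma aux_periodic (n : ℕ) (x y : ℝ → ℝ)
    (hx : ∀ t, HasDerivAt x (y t) t)
    (hy : ∀ t, HasDerivAt y (-(x t ^ (2 * n + 1))) t) :
    ∃ T > (0 : ℝ), ∀ t, x (t + T) = x t ∧ y (t + T) = y t := by
  obtain ⟨t₀, ht₀, hy₀⟩ := aux_exists_zero n x y hx hy 0
  obtain ⟨t₁, ht₁, hy₁⟩ := aux_exists_zero n x y hx hy t₀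
  have refl₀ := aux_reflect n x y hx hy t₀ hy₀
  have refl₁ := aux_reflect n x y hx hy t₁ hy₁
  refine ⟨2 * (t₁ - t₀), by linarith, fun t => ?_⟩
  have e1 : t + 2 * (t₁ - t₀) = 2 * t₁ - (2 * t₀ - t) := by ring
  constructor
  · rw [e1, ← (refl₁ (2 * t₀ - t)).1, ← (refl₀ t).1]
  · have h1 := (refl₁ (2 * t₀ - t)).2
    have h0 := (refl₀ t).2
    rw [e1]
    linarith

/-- Every solution of `ẋ = y, ẏ = -x^{2n+1}` with nonzero initial value is
periodic; in particular the solution `(C, S)` with `(C(0), S(0)) = (1, 0)` is periodic with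
a minimal period `T* > 0`. -/
theorem autonomous_duffing_periodic (n : ℕ) (hn : 1 ≤ n) :
    (∀ x y : ℝ → ℝ,
      (∀ t, HasDerivAt x (y t) t) →
      (∀ t, HasDerivAt y (-(x t ^ (2 * n + 1))) t) →
      (x 0, y 0) ≠ (0, 0) →
      ∃ T > (0 : ℝ), ∀ t, x (t + T) = x t ∧ y (t + T) = y t) ∧
    ∀ C S : ℝ → ℝ,
      (∀ t, HasDerivAt C (S t) t) →
      (∀ t, HasDerivAt S (-(C t ^ (2 * n + 1))) t) →
      C 0 = 1 → S 0 = 0 →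
      ∃ Tstar > (0 : ℝ),
        (∀ t, C (t + Tstar) = C t ∧ S (t + Tstar) = S t) ∧
        ∀ T > (0 : ℝ), (∀ t, C (t + T) = C t ∧ S (t + T) = S t) → Tstar ≤ T := by
  constructor
  · intro x y hx hy _
    exact aux_periodic n x y hx hy
  · intro C S hC hS hC0 hS0
    obtain ⟨T, hTpos, hTper⟩ := aux_periodic n C S hC hS
    set G : AddSubgroup ℝ :=
      { carrier := {T | ∀ t, C (t + T) = C t ∧ S (t + T) = S t}
        zero_mem' := by intro t; simp
        add_mem' := by
          intro T₁ T₂ h₁ h₂ t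
          have e : t + (T₁ + T₂) = (t + T₁) + T₂ := by ring
          rw [e]
          exact ⟨((h₂ (t + T₁)).1).trans (h₁ t).1, ((h₂ (t + T₁)).2).trans (h₁ t).2⟩
        neg_mem' := by
          intro T h t
          have e : (t + -T) + T = t := by ring
          have := h (t + -T)
          rw [e] at this
          exact ⟨this.1.symm, this.2.symm⟩ } with hG
    have hTG : T ∈ G := hTper
    rcases AddSubgroup.dense_or_cyclic G with hd | ⟨a, hcyc⟩
    · -- dense case: C, S constant, contradiction
      exfalso
      have hCcont : Continuous C := continuous_iff_continuousAt.mpr fun s => (hC s).continuousAt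
      have hScont : Continuous S := continuous_iff_continuousAt.mpr fun s => (hS s).continuousAt
      set Z : Set ℝ := {T | C T = 1 ∧ S T = 0} with hZ
      have hZclosed : IsClosed Z :=
        (isClosed_eq hCcont continuous_const).inter (isClosed_eq hScont continuous_const)
      have hsub : (G : Set ℝ) ⊆ Z := by
        intro T hT
        have := hT 0
        simp only [zero_add] at this
        exact ⟨this.1.trans hC0, this.2.trans hS0⟩
      have hZuniv : Z = Set.univ := by
        have h1 : closure (G : Set ℝ) ⊆ Z := hZclosed.closure_subset_iff.mpr hsub
        have h2 : closure (G : Set ℝ) = Set.univ := hd.closure_eq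
        rw [h2] at h1
        exact Set.eq_univ_of_univ_subset h1
      have hCone : ∀ t, C t = 1 := fun t => ((hZuniv ▸ Set.mem_univ t : t ∈ Z)).1
      have hSzero : ∀ t, S t = 0 := fun t => ((hZuniv ▸ Set.mem_univ t : t ∈ Z)).2
      have h1 : HasDerivAt (fun _ : ℝ => (0 : ℝ)) (-(C 0 ^ (2 * n + 1))) 0 := by
        have hSfun : S = fun _ => 0 := funext hSzero
        have := hS 0
        rw [hSfun] at this
        exact this
      have h2 : -(C 0 ^ (2 * n + 1)) = 0 := h1.unique (hasDerivAt_const 0 0)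
      rw [hC0, one_pow] at h2
      norm_num at h2
    · -- cyclic case
      have ha0 : a ≠ 0 := by
        rintro rfl
        rw [AddSubgroup.closure_singleton_zero] at hcyc
        rw [hcyc] at hTG
        rw [AddSubgroup.mem_bot] at hTG
        linarith
      have haG : a ∈ G := by
        rw [hcyc]
        exact AddSubgroup.subset_closure (Set.mem_singleton a)
      have habsG : |a| ∈ G := by
        rcases abs_choice a with h | h
        · rw [h]; exact haG
        · rw [h]; exact AddSubgroup.neg_mem G haG
      refine ⟨|a|, abs_pos.mpr ha0, habsG, ?_⟩
      intro T' hT'pos hT'per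
      have hT'G : T' ∈ G := hT'per
      rw [hcyc, AddSubgroup.mem_closure_singleton] at hT'G
      obtain ⟨k, hk⟩ := hT'G
      have hk0 : k ≠ 0 := by
        rintro rfl
        simp at hk
        linarith
      have h1 : (1 : ℝ) ≤ |(k : ℝ)| := by
        have : (1 : ℤ) ≤ |k| := Int.one_le_abs hk0
        calc (1:ℝ) = ((1:ℤ):ℝ) := by norm_num
          _ ≤ ((|k|:ℤ):ℝ) := by exact_mod_cast this
          _ = |(k:ℝ)| := by push_cast; ring
      have h2 : T' = (k : ℝ) * a := by rw [← hk]; simp [zsmul_eq_mul]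
      calc |a| ≤ |(k:ℝ)| * |a| := le_mul_of_one_le_left (abs_nonneg a) h1
        _ = |(k:ℝ) * a| := (abs_mul _ _).symm
        _ = |T'| := by rw [h2]
        _ = T' := abs_of_pos hT'pos
end
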